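/- Let k be a field of characteristic ≠ 2, let a, b, c ∈ k be nonzero with ac = b², and let λ ∈ k. Then N^λ∘L_{(a,b,c)} = L_{(a,b,c)}∘N^{(bc)^{−1}λ} as k-algebra endomorphisms of k[X,Y,Z]. -/

import Mathlib

open MvPolynomial

/-- Over a field of characteristic `≠ 2`, for nonzero `a,b,c` with `ac = b²` and any `λ`,
one has `N^λ ∘ L_{(a,b,c)} = L_{(a,b,c)} ∘ N^{(bc)⁻¹λ}`. -/
theorem nagata_stmt_9 (k : Type*) [Field k] (h2 : (2 : k) ≠ 0)
    (a b c : k) (ha : a ≠ 0) (hb : b ≠ 0) (hc : c ≠ 0) (habc : a * c = b ^ 2)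
    (lam : k)
    (Δ : MvPolynomial (Fin 3) k) (hΔ : Δ = X 0 * X 2 + X 1 ^ 2)
    (Nmap : k → (MvPolynomial (Fin 3) k →ₐ[k] MvPolynomial (Fin 3) k))
    (hNX : ∀ l : k, Nmap l (X 0) = X 0 - (2 * l) • (X 1 * Δ) - (l ^ 2 / 2) • (X 2 * Δ ^ 2))
    (hNY : ∀ l : k, Nmap l (X 1) = X 1 + l • (X 2 * Δ))
    (hNZ : ∀ l : k, Nmap l (X 2) = X 2)
    (L : MvPolynomial (Fin 3) k ≃ₐ[k] MvPolynomial (Fin 3) k)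
    (hLX : L (X 0) = a • X 0) (hLY : L (X 1) = b • X 1) (hLZ : L (X 2) = c • X 2) :
    ∀ p : MvPolynomial (Fin 3) k, Nmap lam (L p) = L (Nmap ((b * c)⁻¹ * lam) p) := by
  set μ := (b * c)⁻¹ * lam with hμ
  have key : (Nmap lam).comp L.toAlgHom = (L.toAlgHom).comp (Nmap μ) := by
    apply MvPolynomial.algHom_ext
    intro i
    have hLΔ : L Δ = (b ^ 2) • Δ := by
      rw [hΔ]
      simp only [map_add, map_mul, map_pow, hLX, hLY, hLZ, smul_pow]
      rw [smul_mul_smul_comm, habc, smul_add]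
    fin_cases i <;>
      simp only [AlgHom.comp_apply, AlgEquiv.toAlgHom_eq_coe, AlgHom.coe_coe, AlgEquiv.coe_algHom, Fin.isValue,
        Fin.zero_eta, Fin.mk_one, hNX, hNY, hNZ, hLX, hLY, hLZ, map_sub, map_add, map_smul,
        map_mul, map_pow, hLΔ, smul_pow, smul_mul_smul_comm, mul_smul_comm, smul_mul_assoc,
        smul_smul]
    · match_scalars
      · ring
      · simp only [hμ]
        field_simp
        linear_combination (-lam) * habc
      · simp only [hμ]
        field_simp
        linear_combination (-lam ^ 2) * habc
    · match_scalars
      · ring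
      · simp only [hμ]
        field_simp
    · show (Nmap lam) (L (X 2)) = L ((Nmap μ) (X 2))
      rw [hLZ, map_smul, hNZ, hNZ, hLZ]
  intro p
  exact DFunLike.congr_fun key p
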